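/- If the Gromov–Prohorov distance d_GP(X_n, X) → 0, then for every ℓ ≥ 1 the distribution of the ℓ×ℓ matrix of pairwise distances (d_n(ξ_i^{(n)}, ξ_j^{(n)}))_{i,j≤ℓ} of ℓ i.i.d. points sampled from μ_n converges weakly to the distribution of (d(ξ_i, ξ_j))_{i,j≤ℓ} for ℓ i.i.d. points sampled from μ. -/

import Mathlib

open MeasureTheory Metric

open Set EMetric Filter
open scoped ENNReal NNReal

/-- Layer-cake step: absorb one Prohorov-style bound into an integral comparison. -/
lemma lintegral_step {Z : Type*} [MeasurableSpace Z]
    (ρ ρ' : Measure Z) [IsProbabilityMeasure ρ'] {ε : ℝ}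
    {g h : Z → ℝ} (hg : Measurable g) (hh : Measurable h)
    (hg0 : ∀ x, 0 ≤ g x) (hg1 : ∀ x, g x ≤ 1) (hh0 : ∀ x, 0 ≤ h x)
    (key : ∀ t : ℝ, 0 < t → ρ' {x | t < g x} ≤ ρ {x | t ≤ h x} + ENNReal.ofReal ε) :
    ∫⁻ x, ENNReal.ofReal (g x) ∂ρ' ≤ ∫⁻ x, ENNReal.ofReal (h x) ∂ρ + ENNReal.ofReal ε := by
  rw [lintegral_eq_lintegral_meas_lt ρ' (Filter.Eventually.of_forall hg0) hg.aemeasurable,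
    lintegral_eq_lintegral_meas_le ρ (Filter.Eventually.of_forall hh0) hh.aemeasurable]
  have hsplit : (Set.Ioi (0:ℝ)) = Set.Ioo 0 1 ∪ Set.Ici 1 := by
    ext t; simp only [Set.mem_Ioi, Set.mem_union, Set.mem_Ioo, Set.mem_Ici]
    constructor
    · intro ht; rcases lt_or_ge t 1 with h1 | h1
      · exact Or.inl ⟨ht, h1⟩
      · exact Or.inr h1
    · rintro (⟨ht, _⟩ | h1); · exact ht
      · linarith
  have hdisj : Disjoint (Set.Ioo (0:ℝ) 1) (Set.Ici 1) := by
    rw [Set.disjoint_left]; rintro t ⟨_, ht1⟩ ht2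
    exact absurd ht2 (not_le.mpr ht1)
  rw [hsplit, lintegral_union measurableSet_Ici hdisj]
  have hzero : ∫⁻ t in Set.Ici (1:ℝ), ρ' {x | t < g x} = 0 := by
    have : ∀ t ∈ Set.Ici (1:ℝ), ρ' {x | t < g x} = 0 := by
      intro t ht
      have : {x | t < g x} = ∅ := by
        ext x; simp only [Set.mem_setOf_eq, Set.mem_empty_iff_false, iff_false, not_lt]
        exact le_trans (hg1 x) ht
      simp [this]
    calc ∫⁻ t in Set.Ici (1:ℝ), ρ' {x | t < g x}
        = ∫⁻ _ in Set.Ici (1:ℝ), 0 := setLIntegral_congr_fun measurableSet_Ici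
          this
      _ = 0 := lintegral_zero
  rw [hzero, add_zero]
  calc ∫⁻ t in Set.Ioo (0:ℝ) 1, ρ' {x | t < g x}
      ≤ ∫⁻ t in Set.Ioo (0:ℝ) 1, (ρ {x | t ≤ h x} + ENNReal.ofReal ε) := by
        apply setLIntegral_mono' measurableSet_Ioo
        intro t ht; exact key t ht.1
    _ = (∫⁻ t in Set.Ioo (0:ℝ) 1, ρ {x | t ≤ h x}) + ENNReal.ofReal ε * volume (Set.Ioo (0:ℝ) 1) := by
        rw [lintegral_add_right _ measurable_const, lintegral_const,
          Measure.restrict_apply_univ]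
    _ ≤ (∫⁻ t in Set.Ioo (0:ℝ) 1 ∪ Set.Ici 1, ρ {x | t ≤ h x}) + ENNReal.ofReal ε := by
        gcongr
        · exact Set.subset_union_left
        · rw [Real.volume_Ioo]; simp

/-- Inclusion: a `cthickening` of a section is contained in the section of a bigger
`cthickening`. -/
lemma cthickening_section_subset {Z W : Type*} [MetricSpace Z] [MetricSpace W]
    {ε δ : ℝ} (hε : 0 ≤ ε) (hδ : 0 ≤ δ) (B : Set (Z × W)) (x : Z) :
    cthickening δ (Prod.mk x ⁻¹' cthickening ε B) ⊆
      Prod.mk x ⁻¹' cthickening (ε + δ) B := by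
  intro z hz
  simp only [Set.mem_preimage, mem_cthickening_iff] at hz ⊢
  rw [ENNReal.ofReal_add hε hδ]
  apply ENNReal.le_of_forall_pos_le_add
  intro η hη _
  have h1 : infEdist z (Prod.mk x ⁻¹' cthickening ε B) < ENNReal.ofReal δ + η := by
    refine lt_of_le_of_lt hz ?_
    exact ENNReal.lt_add_right ENNReal.ofReal_ne_top (by exact_mod_cast hη.ne')
  obtain ⟨w, hw, hzw⟩ := infEdist_lt_iff.mp h1
  simp only [Set.mem_preimage, mem_cthickening_iff] at hw
  calc infEdist (x, z) B ≤ edist (x, z) (x, w) + infEdist (x, w) B :=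
        infEdist_le_edist_add_infEdist
    _ ≤ (ENNReal.ofReal δ + η) + ENNReal.ofReal ε := by
        apply add_le_add _ hw
        rw [Prod.edist_eq, edist_self]
        simpa using hzw.le
    _ = ENNReal.ofReal ε + ENNReal.ofReal δ + η := by ring

/-- Product step: combine a Prohorov bound on `Z` with a Prohorov-type bound on `W`. -/
lemma prod_step {Z W : Type*} [MetricSpace Z] [MeasurableSpace Z] [BorelSpace Z]
    [SecondCountableTopology Z]
    [MetricSpace W] [MeasurableSpace W] [BorelSpace W]
    [SecondCountableTopology W]
    (ρ ρ' : Measure Z) [IsProbabilityMeasure ρ] [IsProbabilityMeasure ρ']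
    (π π' : Measure W) [IsProbabilityMeasure π] [IsProbabilityMeasure π']
    {ε δ c : ℝ} (hε : 0 < ε) (hδ : 0 ≤ δ) (hc : 0 ≤ c)
    (hZ : ∀ B : Set Z, MeasurableSet B → ρ' B ≤ ρ (cthickening ε B) + ENNReal.ofReal ε)
    (hW : ∀ S : Set W, MeasurableSet S → π' S ≤ π (cthickening δ S) + ENNReal.ofReal c) :
    ∀ B : Set (Z × W), MeasurableSet B →
      (ρ'.prod π') B ≤ (ρ.prod π) (cthickening (ε + δ) B) + ENNReal.ofReal (ε + c) := by
  intro B hB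
  have hctm : ∀ r : ℝ, MeasurableSet (cthickening r B) :=
    fun r => (isClosed_cthickening).measurableSet
  set g : Z → ℝ := fun x => (π' (Prod.mk x ⁻¹' B)).toReal with hgdef
  set h : Z → ℝ := fun x => (π' (Prod.mk x ⁻¹' cthickening ε B)).toReal with hhdef
  have hgm : Measurable g := (measurable_measure_prodMk_left hB).ennreal_toReal
  have hhm : Measurable h := (measurable_measure_prodMk_left (hctm ε)).ennreal_toReal
  have hg0 : ∀ x, 0 ≤ g x := fun x => ENNReal.toReal_nonneg
  have hh0 : ∀ x, 0 ≤ h x := fun x => ENNReal.toReal_nonneg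
  have hg1 : ∀ x, g x ≤ 1 := by
    intro x
    have := prob_le_one (μ := π') (s := Prod.mk x ⁻¹' B)
    calc g x ≤ (1 : ℝ≥0∞).toReal := ENNReal.toReal_mono ENNReal.one_ne_top this
      _ = 1 := by simp
  -- the key claim: the ε-cthickening of a superlevel set of g is inside a superlevel set of h
  have key : ∀ t : ℝ, 0 < t → ρ' {x | t < g x} ≤ ρ {x | t ≤ h x} + ENNReal.ofReal ε := by
    intro t ht
    have hlev : MeasurableSet {x | t < g x} := measurableSet_lt measurable_const hgm
    refine le_trans ((hZ _ hlev).trans ?_) le_rfl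
    gcongr
    intro x hx
    simp only [Set.mem_setOf_eq]
    -- x is in cthickening ε {t < g}
    have hsec : ∀ n : ℕ, ENNReal.ofReal t ≤
        π' (Prod.mk x ⁻¹' cthickening (ε + 1/(n+1)) B) := by
      intro n
      have hpos : (0:ℝ) < 1/(n+1) := by positivity
      have hx' : infEdist x {x | t < g x} < ENNReal.ofReal (ε + 1/(n+1)) := by
        rw [mem_cthickening_iff] at hx
        refine lt_of_le_of_lt hx ?_
        exact ENNReal.ofReal_lt_ofReal_iff_of_nonneg hε.le |>.mpr (by linarith)
      obtain ⟨y, hy, hxy⟩ := infEdist_lt_iff.mp hx'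
      simp only [Set.mem_setOf_eq] at hy
      have hsub : Prod.mk y ⁻¹' B ⊆ Prod.mk x ⁻¹' cthickening (ε + 1/(n+1)) B := by
        intro w hw
        simp only [Set.mem_preimage, mem_cthickening_iff]
        calc infEdist (x, w) B ≤ edist (x, w) (y, w) := infEdist_le_edist_of_mem hw
          _ ≤ ENNReal.ofReal (ε + 1/(n+1)) := by
              rw [Prod.edist_eq, edist_self]; simpa using hxy.le
      calc ENNReal.ofReal t ≤ π' (Prod.mk y ⁻¹' B) :=
            ENNReal.ofReal_le_of_le_toReal hy.le
        _ ≤ _ := measure_mono hsub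
    -- pass to the intersection
    have hInter : (⋂ n : ℕ, Prod.mk x ⁻¹' cthickening (ε + 1/(n+1)) B) =
        Prod.mk x ⁻¹' cthickening ε B := by
      apply Set.Subset.antisymm
      · intro p hp
        simp only [Set.mem_iInter, Set.mem_preimage, mem_cthickening_iff] at hp ⊢
        have hlim : Tendsto (fun n : ℕ => ENNReal.ofReal (ε + 1/(n+1))) atTop
            (nhds (ENNReal.ofReal ε)) := by
          apply ENNReal.tendsto_ofReal
          have := tendsto_one_div_add_atTop_nhds_zero_nat (𝕜 := ℝ)
          have h2 := this.const_add ε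
          simpa using h2
        exact ge_of_tendsto' hlim hp
      · intro p hp
        simp only [Set.mem_iInter, Set.mem_preimage, mem_cthickening_iff] at hp ⊢
        intro n
        refine le_trans hp ?_
        apply ENNReal.ofReal_le_ofReal
        have : (0:ℝ) < 1/(n+1) := by positivity
        linarith
    have hmono : ∀ m n : ℕ, m ≤ n →
        Prod.mk x ⁻¹' cthickening (ε + 1/(n+1)) B ⊆
        Prod.mk x ⁻¹' cthickening (ε + 1/(m+1)) B := by
      intro m n hmn
      apply Set.preimage_mono
      apply cthickening_mono
      have h1 : (1:ℝ)/(n+1) ≤ 1/(m+1) := by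
        apply one_div_le_one_div_of_le (by positivity)
        exact_mod_cast by omega
      linarith
    have hiInf : π' (Prod.mk x ⁻¹' cthickening ε B) =
        ⨅ n : ℕ, π' (Prod.mk x ⁻¹' cthickening (ε + 1/(n+1)) B) := by
      rw [← hInter]
      apply Directed.measure_iInter
      · intro n
        exact ((hctm _).preimage measurable_prodMk_left).nullMeasurableSet
      · intro m n
        rcases le_total m n with hmn | hnm
        · exact ⟨n, hmono m n hmn, Set.Subset.rfl⟩
        · exact ⟨m, Set.Subset.rfl, hmono n m hnm⟩
      · exact ⟨0, measure_ne_top _ _⟩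
    have hle : ENNReal.ofReal t ≤ π' (Prod.mk x ⁻¹' cthickening ε B) := by
      rw [hiInf]; exact le_iInf hsec
    have : t ≤ (π' (Prod.mk x ⁻¹' cthickening ε B)).toReal := by
      calc t = (ENNReal.ofReal t).toReal := (ENNReal.toReal_ofReal ht.le).symm
        _ ≤ _ := ENNReal.toReal_mono (measure_ne_top _ _) hle
    exact this
  have step := lintegral_step ρ ρ' hgm hhm hg0 hg1 hh0 key
  have hLHS : ∫⁻ x, ENNReal.ofReal (g x) ∂ρ' = (ρ'.prod π') B := by
    rw [Measure.prod_apply hB]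
    apply lintegral_congr
    intro x
    exact ENNReal.ofReal_toReal (measure_ne_top _ _)
  have hRHS : ∫⁻ x, ENNReal.ofReal (h x) ∂ρ ≤
      (ρ.prod π) (cthickening (ε + δ) B) + ENNReal.ofReal c := by
    have hptwise : ∀ x, ENNReal.ofReal (h x) ≤
        π (Prod.mk x ⁻¹' cthickening (ε + δ) B) + ENNReal.ofReal c := by
      intro x
      rw [hhdef]
      simp only
      rw [ENNReal.ofReal_toReal (measure_ne_top _ _)]
      calc π' (Prod.mk x ⁻¹' cthickening ε B)
          ≤ π (cthickening δ (Prod.mk x ⁻¹' cthickening ε B)) + ENNReal.ofReal c :=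
            hW _ ((hctm ε).preimage measurable_prodMk_left)
        _ ≤ π (Prod.mk x ⁻¹' cthickening (ε + δ) B) + ENNReal.ofReal c := by
            gcongr
            exact cthickening_section_subset hε.le hδ B x
    calc ∫⁻ x, ENNReal.ofReal (h x) ∂ρ
        ≤ ∫⁻ x, (π (Prod.mk x ⁻¹' cthickening (ε + δ) B) + ENNReal.ofReal c) ∂ρ :=
          lintegral_mono hptwise
      _ = (∫⁻ x, π (Prod.mk x ⁻¹' cthickening (ε + δ) B) ∂ρ) + ENNReal.ofReal c := by
          rw [lintegral_add_right _ measurable_const, lintegral_const, measure_univ, mul_one]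
      _ = (ρ.prod π) (cthickening (ε + δ) B) + ENNReal.ofReal c := by
          rw [Measure.prod_apply (isClosed_cthickening).measurableSet]
  calc (ρ'.prod π') B = ∫⁻ x, ENNReal.ofReal (g x) ∂ρ' := hLHS.symm
    _ ≤ ∫⁻ x, ENNReal.ofReal (h x) ∂ρ + ENNReal.ofReal ε := step
    _ ≤ ((ρ.prod π) (cthickening (ε + δ) B) + ENNReal.ofReal c) + ENNReal.ofReal ε := by
        gcongr
    _ = (ρ.prod π) (cthickening (ε + δ) B) + ENNReal.ofReal (ε + c) := by
        rw [ENNReal.ofReal_add hε.le hc]; ring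

/-- Preimage of a cthickening under a surjective isometry. -/
lemma preimage_cthickening_of_isometry {A B : Type*} [MetricSpace A] [MetricSpace B]
    {ψ : A → B} (hψ : Isometry ψ) (hsurj : Function.Surjective ψ) (r : ℝ) (T : Set B) :
    ψ ⁻¹' (cthickening r T) = cthickening r (ψ ⁻¹' T) := by
  ext a
  simp only [Set.mem_preimage, mem_cthickening_iff]
  conv_lhs => rw [← Set.image_preimage_eq T hsurj]
  rw [infEdist_image hψ]

/-- The splitting map `(Fin (ℓ+1) → Z) → Z × (Fin ℓ → Z)` is an isometry. -/
lemma isometry_piFinSuccAbove {Z : Type*} [MetricSpace Z] [MeasurableSpace Z] (ℓ : ℕ) :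
    Isometry ⇑(MeasurableEquiv.piFinSuccAbove (fun _ : Fin (ℓ+1) => Z) 0) := by
  apply Isometry.of_dist_eq
  intro f g
  have hcoe : ∀ f : Fin (ℓ+1) → Z,
      (MeasurableEquiv.piFinSuccAbove (fun _ : Fin (ℓ+1) => Z) 0) f
        = (f 0, Fin.removeNth 0 f) := by
    intro f; rfl
  rw [hcoe, hcoe]
  apply le_antisymm
  · rw [Prod.dist_eq]
    apply max_le
    · exact dist_le_pi_dist f g 0
    · apply (dist_pi_le_iff dist_nonneg).mpr
      intro j
      exact dist_le_pi_dist f g _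
  · apply (dist_pi_le_iff (by rw [Prod.dist_eq]; positivity)).mpr
    intro i
    rw [Prod.dist_eq]
    induction i using Fin.cases with
    | zero => exact le_max_left _ _
    | succ j =>
      refine le_trans ?_ (le_max_right _ _)
      have : ∀ h : Fin (ℓ+1) → Z, h j.succ = Fin.removeNth 0 h j := by
        intro h; simp [Fin.removeNth]
      rw [this f, this g]
      exact dist_le_pi_dist (Fin.removeNth 0 f) (Fin.removeNth 0 g) j

/-- Prohorov-type bound for product (i.i.d.) measures. -/
lemma pi_step {Z : Type*} [MetricSpace Z] [MeasurableSpace Z] [BorelSpace Z]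
    [SecondCountableTopology Z]
    (κ κ' : Measure Z) [IsProbabilityMeasure κ] [IsProbabilityMeasure κ'] {ε : ℝ} (hε : 0 < ε)
    (hyp : ∀ B : Set Z, MeasurableSet B → κ' B ≤ κ (cthickening ε B) + ENNReal.ofReal ε) :
    ∀ (ℓ : ℕ) (B : Set (Fin ℓ → Z)), MeasurableSet B →
      (Measure.pi fun _ : Fin ℓ => κ') B ≤
        (Measure.pi fun _ : Fin ℓ => κ) (cthickening (ℓ * ε) B) + ENNReal.ofReal (ℓ * ε) := by
  intro ℓ
  induction ℓ with
  | zero =>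
    intro B hB
    rcases B.eq_empty_or_nonempty with rfl | hne
    · simp
    · have hBuniv : B = Set.univ := by
        apply Set.eq_univ_of_forall
        intro x
        obtain ⟨y, hy⟩ := hne
        rwa [Subsingleton.elim x y]
      subst hBuniv
      have : (Set.univ : Set (Fin 0 → Z)) ⊆ cthickening ((0:ℕ) * ε) Set.univ := by
        apply self_subset_cthickening
      calc (Measure.pi fun _ : Fin 0 => κ') Set.univ = 1 := measure_univ
        _ = (Measure.pi fun _ : Fin 0 => κ) Set.univ := measure_univ.symm
        _ ≤ _ := le_add_right (measure_mono this)
  | succ ℓ IH =>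
    intro B hB
    set e := MeasurableEquiv.piFinSuccAbove (fun _ : Fin (ℓ+1) => Z) 0 with he
    have mp : MeasurePreserving e (Measure.pi fun _ : Fin (ℓ+1) => κ)
        ((κ).prod (Measure.pi fun _ : Fin ℓ => κ)) :=
      measurePreserving_piFinSuccAbove (fun _ : Fin (ℓ+1) => (κ : Measure Z)) 0
    have mp' : MeasurePreserving e (Measure.pi fun _ : Fin (ℓ+1) => κ')
        ((κ').prod (Measure.pi fun _ : Fin ℓ => κ')) :=
      measurePreserving_piFinSuccAbove (fun _ : Fin (ℓ+1) => (κ' : Measure Z)) 0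
    have hiso : Isometry ⇑e := isometry_piFinSuccAbove ℓ
    have hsurj : Function.Surjective ⇑e := e.surjective
    set S : Set (Z × (Fin ℓ → Z)) := e.symm ⁻¹' B with hS
    have hSm : MeasurableSet S := e.symm.measurable hB
    have hpre : e ⁻¹' S = B := by
      rw [hS, ← Set.preimage_comp]
      simp
    have h1 : (Measure.pi fun _ : Fin (ℓ+1) => κ') B = ((κ').prod
        (Measure.pi fun _ : Fin ℓ => κ')) S := by
      rw [← hpre]; exact mp'.measure_preimage hSm.nullMeasurableSet
    have h2 := prod_step κ κ' (Measure.pi fun _ : Fin ℓ => κ)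
      (Measure.pi fun _ : Fin ℓ => κ') hε (by positivity) (by positivity)
      hyp (IH) S hSm
    have h3 : ((κ).prod (Measure.pi fun _ : Fin ℓ => κ)) (cthickening (ε + ℓ * ε) S) =
        (Measure.pi fun _ : Fin (ℓ+1) => κ) (cthickening (ε + ℓ * ε) B) := by
      rw [← mp.measure_preimage (isClosed_cthickening.measurableSet).nullMeasurableSet,
        preimage_cthickening_of_isometry hiso hsurj, hpre]
    have harith : ((ℓ : ℝ) + 1) * ε = ε + ℓ * ε := by ring
    have hcast : ((ℓ + 1 : ℕ) : ℝ) = (ℓ : ℝ) + 1 := by push_cast; ring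
    rw [hcast, harith]
    calc (Measure.pi fun _ : Fin (ℓ+1) => κ') B = _ := h1
      _ ≤ ((κ).prod (Measure.pi fun _ : Fin ℓ => κ)) (cthickening (ε + ℓ * ε) S)
          + ENNReal.ofReal (ε + ℓ * ε) := h2
      _ = _ := by rw [h3]

/-- Push a Prohorov-type bound through a `2`-Lipschitz map. -/
lemma map_step {A M : Type*} [MetricSpace A] [MeasurableSpace A] [OpensMeasurableSpace A]
    [MetricSpace M] [MeasurableSpace M] [OpensMeasurableSpace M]
    (ν ν' : Measure A) {D : A → M} (hD : LipschitzWith 2 D) (hDm : Measurable D)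
    {r c : ℝ} (hr : 0 ≤ r)
    (hyp : ∀ B : Set A, MeasurableSet B → ν' B ≤ ν (cthickening r B) + ENNReal.ofReal c) :
    ∀ B : Set M, MeasurableSet B →
      (ν'.map D) B ≤ (ν.map D) (cthickening (2*r) B) + ENNReal.ofReal c := by
  intro B hB
  have hsub : cthickening r (D ⁻¹' B) ⊆ D ⁻¹' (cthickening (2*r) B) := by
    intro a ha
    rcases (D ⁻¹' B).eq_empty_or_nonempty with hemp | hne
    · rw [hemp, cthickening_empty] at ha
      exact absurd ha (Set.notMem_empty a)
    simp only [Set.mem_preimage, mem_cthickening_iff]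
    rw [mem_cthickening_iff] at ha
    apply ENNReal.le_of_forall_pos_le_add
    intro η hη _
    have hη2 : (0:ℝ≥0∞) < (η : ℝ≥0∞) / 2 := by
      apply ENNReal.div_pos (by exact_mod_cast hη.ne') (by norm_num)
    have ha' : infEdist a (D ⁻¹' B) < ENNReal.ofReal r + (η : ℝ≥0∞) / 2 :=
      lt_of_le_of_lt ha (ENNReal.lt_add_right ENNReal.ofReal_ne_top hη2.ne')
    obtain ⟨y, hy, hay⟩ := infEdist_lt_iff.mp ha'
    calc infEdist (D a) B ≤ edist (D a) (D y) := infEdist_le_edist_of_mem hy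
      _ ≤ 2 * edist a y := hD a y
      _ ≤ 2 * (ENNReal.ofReal r + (η : ℝ≥0∞) / 2) := by gcongr
      _ = ENNReal.ofReal (2*r) + 2 * ((η : ℝ≥0∞) / 2) := by
          rw [mul_add]
          congr 1
          rw [ENNReal.ofReal_mul (by norm_num : (0:ℝ) ≤ 2)]
          norm_num
      _ = ENNReal.ofReal (2*r) + (η : ℝ≥0∞) := by
          congr 1
          rw [ENNReal.mul_div_cancel' (by norm_num) (by norm_num)]
  rw [Measure.map_apply hDm hB,
    Measure.map_apply hDm isClosed_cthickening.measurableSet]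
  calc ν' (D ⁻¹' B) ≤ ν (cthickening r (D ⁻¹' B)) + ENNReal.ofReal c :=
        hyp _ (hDm hB)
    _ ≤ ν (D ⁻¹' cthickening (2*r) B) + ENNReal.ofReal c := by
        gcongr

/-- A complete separable metric measure space, bundled. -/
structure MMS where
  carrier : Type
  met : MetricSpace carrier
  meas : MeasurableSpace carrier
  borel : @BorelSpace carrier met.toUniformSpace.toTopologicalSpace meas
  μ : @Measure carrier meas
  prob : @IsProbabilityMeasure carrier meas μ
  complete : @CompleteSpace carrier met.toUniformSpace
  separable : @TopologicalSpace.SeparableSpace carrier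
    met.toUniformSpace.toTopologicalSpace

attribute [instance] MMS.met MMS.meas MMS.borel MMS.prob MMS.complete
  MMS.separable

/-- The Prohorov distance (parameter 1) between `ρ` and `ρ'` is at most `ε`. -/
def prohorovLE {Z : Type*} [MetricSpace Z] [MeasurableSpace Z]
    (ε : ℝ) (ρ ρ' : Measure Z) : Prop :=
  ∀ B : Set Z, MeasurableSet B →
    ρ' B ≤ ρ (cthickening ε B) + ENNReal.ofReal ε ∧
    ρ B ≤ ρ' (cthickening ε B) + ENNReal.ofReal ε

/-- The Gromov–Prohorov distance between bundled metric measure spaces. -/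
noncomputable def gpDist (A B : MMS) : ℝ :=
  sInf {ε : ℝ | 0 < ε ∧ ∃ (Z : Type) (_ : MetricSpace Z)
    (_ : MeasurableSpace Z) (_ : BorelSpace Z)
    (φ : A.carrier → Z) (φ' : B.carrier → Z),
    Isometry φ ∧ Isometry φ' ∧ prohorovLE ε (A.μ.map φ) (B.μ.map φ')}

/-- The distribution of the `ℓ×ℓ` matrix of pairwise distances of `ℓ` i.i.d.
points sampled from `A.μ`. -/
noncomputable def tau (A : MMS) (ℓ : ℕ) : Measure (Fin ℓ → Fin ℓ → ℝ) :=
  (Measure.pi fun _ : Fin ℓ => A.μ).map (fun f i j => dist (f i) (f j))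

/-- The distance-matrix map. -/
def distMatrix (Z : Type*) [MetricSpace Z] (ℓ : ℕ) :
    (Fin ℓ → Z) → (Fin ℓ → Fin ℓ → ℝ) := fun f i j => dist (f i) (f j)

lemma lipschitz_distMatrix (Z : Type*) [MetricSpace Z] (ℓ : ℕ) :
    LipschitzWith 2 (distMatrix Z ℓ) := by
  apply LipschitzWith.of_dist_le_mul
  intro f g
  have h2 : ((2:ℝ≥0):ℝ) = 2 := by norm_num
  rw [h2]
  apply (dist_pi_le_iff (by positivity)).mpr
  intro i
  apply (dist_pi_le_iff (by positivity)).mpr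
  intro j
  calc dist (distMatrix Z ℓ f i j) (distMatrix Z ℓ g i j)
      ≤ dist (f i) (g i) + dist (f j) (g j) := dist_dist_dist_le _ _ _ _
    _ ≤ dist f g + dist f g := add_le_add (dist_le_pi_dist f g i) (dist_le_pi_dist f g j)
    _ = 2 * dist f g := by ring

lemma continuous_distMatrix (Z : Type*) [MetricSpace Z] (ℓ : ℕ) :
    Continuous (distMatrix Z ℓ) :=
  continuous_pi fun i => continuous_pi fun j =>
    ((continuous_apply i).dist (continuous_apply j))

/-- Main comparison: taking `ε` from the Gromov–Prohorov defining set, the distance-matrix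
distributions satisfy a Prohorov-type bound. -/
lemma tau_bound (A B : MMS) (ℓ : ℕ) {ε : ℝ} (hε : 0 < ε)
    (Z : Type) [MetricSpace Z] [MeasurableSpace Z] [BorelSpace Z]
    (φ : A.carrier → Z) (φ' : B.carrier → Z)
    (hφ : Isometry φ) (hφ' : Isometry φ')
    (hpro : prohorovLE ε (A.μ.map φ) (B.μ.map φ')) :
    (∀ S : Set (Fin ℓ → Fin ℓ → ℝ), MeasurableSet S →
      tau B ℓ S ≤ tau A ℓ (cthickening (2*(ℓ*ε)) S) + ENNReal.ofReal (ℓ*ε)) ∧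
    (∀ S : Set (Fin ℓ → Fin ℓ → ℝ), MeasurableSet S →
      tau A ℓ S ≤ tau B ℓ (cthickening (2*(ℓ*ε)) S) + ENNReal.ofReal (ℓ*ε)) := by
  classical
  -- the separable hull of the two ranges
  set Z₀ : Set Z := closure (Set.range φ ∪ Set.range φ') with hZ₀
  have hZ₀closed : IsClosed Z₀ := isClosed_closure
  have hsep : TopologicalSpace.IsSeparable Z₀ := by
    apply TopologicalSpace.IsSeparable.closure
    exact (TopologicalSpace.isSeparable_range hφ.continuous).union
      (TopologicalSpace.isSeparable_range hφ'.continuous)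
  haveI : TopologicalSpace.SeparableSpace ↥Z₀ := hsep.separableSpace
  haveI : SecondCountableTopology ↥Z₀ := UniformSpace.secondCountable_of_separable ↥Z₀
  have hemb : MeasurableEmbedding ((↑) : ↥Z₀ → Z) :=
    MeasurableEmbedding.subtype_coe hZ₀closed.measurableSet
  -- isometric embeddings into Z₀
  set φ₀ : A.carrier → ↥Z₀ := fun a => ⟨φ a, subset_closure (Or.inl ⟨a, rfl⟩)⟩ with hφ₀
  set φ'₀ : B.carrier → ↥Z₀ := fun b => ⟨φ' b, subset_closure (Or.inr ⟨b, rfl⟩)⟩ with hφ'₀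
  have hφ₀iso : Isometry φ₀ := fun x y => hφ x y
  have hφ'₀iso : Isometry φ'₀ := fun x y => hφ' x y
  have hφ₀m : Measurable φ₀ := hφ₀iso.continuous.measurable
  have hφ'₀m : Measurable φ'₀ := hφ'₀iso.continuous.measurable
  set ρ : Measure ↥Z₀ := A.μ.map φ₀ with hρ
  set ρ' : Measure ↥Z₀ := B.μ.map φ'₀ with hρ'
  haveI : IsProbabilityMeasure ρ := Measure.isProbabilityMeasure_map hφ₀m.aemeasurable
  haveI : IsProbabilityMeasure ρ' := Measure.isProbabilityMeasure_map hφ'₀m.aemeasurable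
  -- relation of the measures on Z and on Z₀
  have hmapA : A.μ.map φ = ρ.map (↑) := by
    rw [hρ, Measure.map_map hemb.measurable hφ₀m]
    rfl
  have hmapB : B.μ.map φ' = ρ'.map (↑) := by
    rw [hρ', Measure.map_map hemb.measurable hφ'₀m]
    rfl
  -- prohorov bounds descend to Z₀
  have transfer : ∀ (κ κ' : Measure ↥Z₀),
      (∀ S : Set Z, MeasurableSet S →
        κ'.map (↑) S ≤ κ.map (↑) (cthickening ε S) + ENNReal.ofReal ε) →
      ∀ B₀ : Set ↥Z₀, MeasurableSet B₀ →
        κ' B₀ ≤ κ (cthickening ε B₀) + ENNReal.ofReal ε := by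
    intro κ κ' hyp B₀ hB₀
    have h1 : κ' B₀ = κ'.map (↑) (((↑) : ↥Z₀ → Z) '' B₀) := by
      rw [hemb.map_apply, Set.preimage_image_eq _ Subtype.coe_injective]
    have h2 := hyp _ (hemb.measurableSet_image.mpr hB₀)
    have h3 : κ.map (↑) (cthickening ε (((↑) : ↥Z₀ → Z) '' B₀)) ≤ κ (cthickening ε B₀) := by
      rw [hemb.map_apply]
      apply measure_mono
      intro z₀ hz₀
      simp only [Set.mem_preimage, mem_cthickening_iff] at hz₀ ⊢
      rwa [infEdist_image isometry_subtype_coe] at hz₀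
    calc κ' B₀ = _ := h1
      _ ≤ _ := h2
      _ ≤ _ := add_le_add h3 le_rfl
  have dir1 : ∀ B₀ : Set ↥Z₀, MeasurableSet B₀ →
      ρ' B₀ ≤ ρ (cthickening ε B₀) + ENNReal.ofReal ε := by
    apply transfer
    intro S hS
    rw [← hmapA, ← hmapB]
    exact (hpro S hS).1
  have dir2 : ∀ B₀ : Set ↥Z₀, MeasurableSet B₀ →
      ρ B₀ ≤ ρ' (cthickening ε B₀) + ENNReal.ofReal ε := by
    apply transfer
    intro S hS
    rw [← hmapA, ← hmapB]
    exact (hpro S hS).2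
  -- pi bounds
  have hpi1 := pi_step ρ ρ' hε dir1 ℓ
  have hpi2 := pi_step ρ' ρ hε dir2 ℓ
  -- identification of tau with pushforwards from Z₀
  have hDm : Measurable (distMatrix ↥Z₀ ℓ) := (continuous_distMatrix ↥Z₀ ℓ).measurable
  have htauA : tau A ℓ = (Measure.pi fun _ : Fin ℓ => ρ).map (distMatrix ↥Z₀ ℓ) := by
    have hmp : MeasurePreserving (fun f : Fin ℓ → A.carrier => φ₀ ∘ f)
        (Measure.pi fun _ : Fin ℓ => A.μ) (Measure.pi fun _ : Fin ℓ => ρ) :=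
      measurePreserving_pi _ _ (fun _ => ⟨hφ₀m, rfl⟩)
    rw [tau, ← hmp.map_eq, Measure.map_map hDm hmp.measurable]
    congr 1
    funext f
    ext i j
    exact (hφ₀iso.dist_eq (f i) (f j)).symm
  have htauB : tau B ℓ = (Measure.pi fun _ : Fin ℓ => ρ').map (distMatrix ↥Z₀ ℓ) := by
    have hmp : MeasurePreserving (fun f : Fin ℓ → B.carrier => φ'₀ ∘ f)
        (Measure.pi fun _ : Fin ℓ => B.μ) (Measure.pi fun _ : Fin ℓ => ρ') :=
      measurePreserving_pi _ _ (fun _ => ⟨hφ'₀m, rfl⟩)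
    rw [tau, ← hmp.map_eq, Measure.map_map hDm hmp.measurable]
    congr 1
    funext f
    ext i j
    exact (hφ'₀iso.dist_eq (f i) (f j)).symm
  constructor
  · intro S hS
    rw [htauA, htauB]
    exact map_step _ _ (lipschitz_distMatrix ↥Z₀ ℓ) hDm (by positivity) hpi1 S hS
  · intro S hS
    rw [htauA, htauB]
    exact map_step _ _ (lipschitz_distMatrix ↥Z₀ ℓ) hDm (by positivity) hpi2 S hS

/-- The defining set in the Gromov–Prohorov distance always contains `1`. -/
lemma one_mem_gp_set (A B : MMS) :
    (1:ℝ) ∈ {ε : ℝ | 0 < ε ∧ ∃ (Z : Type) (_ : MetricSpace Z)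
      (_ : MeasurableSpace Z) (_ : BorelSpace Z)
      (φ : A.carrier → Z) (φ' : B.carrier → Z),
      Isometry φ ∧ Isometry φ' ∧ prohorovLE ε (A.μ.map φ) (B.μ.map φ')} := by
  refine ⟨one_pos, A.carrier ⊕ B.carrier, Metric.metricSpaceSum, ?_⟩
  letI : MetricSpace (A.carrier ⊕ B.carrier) := Metric.metricSpaceSum
  letI : MeasurableSpace (A.carrier ⊕ B.carrier) := borel _
  haveI : BorelSpace (A.carrier ⊕ B.carrier) := ⟨rfl⟩
  refine ⟨inferInstance, inferInstance, Sum.inl, Sum.inr,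
    Metric.isometry_inl, Metric.isometry_inr, ?_⟩
  haveI : IsProbabilityMeasure (A.μ.map (Sum.inl : A.carrier → A.carrier ⊕ B.carrier)) :=
    Measure.isProbabilityMeasure_map (Metric.isometry_inl.continuous.measurable.aemeasurable)
  haveI : IsProbabilityMeasure (B.μ.map (Sum.inr : B.carrier → A.carrier ⊕ B.carrier)) :=
    Measure.isProbabilityMeasure_map (Metric.isometry_inr.continuous.measurable.aemeasurable)
  intro S hS
  constructor
  · calc (B.μ.map Sum.inr) S ≤ 1 := prob_le_one
      _ = ENNReal.ofReal 1 := by simp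
      _ ≤ _ := le_add_self
  · calc (A.μ.map Sum.inl) S ≤ 1 := prob_le_one
      _ = ENNReal.ofReal 1 := by simp
      _ ≤ _ := le_add_self

/-- From membership in the GP set, a Lévy–Prokhorov bound on the `tau` measures. -/
lemma lp_bound (A B : MMS) (ℓ : ℕ) {ε : ℝ}
    (hmem : ε ∈ {ε : ℝ | 0 < ε ∧ ∃ (Z : Type) (_ : MetricSpace Z)
      (_ : MeasurableSpace Z) (_ : BorelSpace Z)
      (φ : A.carrier → Z) (φ' : B.carrier → Z),
      Isometry φ ∧ Isometry φ' ∧ prohorovLE ε (A.μ.map φ) (B.μ.map φ')}) :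
    levyProkhorovEDist (tau A ℓ) (tau B ℓ) ≤ ENNReal.ofReal (2*(ℓ*ε)) := by
  obtain ⟨hε, Z, mZ, msZ, bZ, φ, φ', hφ, hφ', hpro⟩ := hmem
  letI := mZ; letI := msZ; haveI := bZ
  obtain ⟨hba, hab⟩ := tau_bound A B ℓ hε Z φ φ' hφ hφ' hpro
  apply levyProkhorovEDist_le_of_forall
  intro ε' S hlt hfin hSm
  have hε'0 : (0:ℝ) ≤ 2*(ℓ*ε) := by positivity
  have htoReal : 2*(ℓ*ε) < ε'.toReal :=
    (ENNReal.ofReal_lt_iff_lt_toReal hε'0 hfin.ne).mp hlt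
  have hthick : ∀ T : Set (Fin ℓ → Fin ℓ → ℝ),
      cthickening (2*(ℓ*ε)) T ⊆ thickening ε'.toReal T := fun T =>
    cthickening_subset_thickening' (lt_of_le_of_lt hε'0 htoReal) htoReal T
  have hofReal : ENNReal.ofReal (ℓ*ε) ≤ ε' := by
    refine le_trans (ENNReal.ofReal_le_ofReal ?_) hlt.le
    nlinarith [hε.le, Nat.cast_nonneg (α := ℝ) ℓ]
  constructor
  · calc tau A ℓ S ≤ tau B ℓ (cthickening (2*(ℓ*ε)) S) + ENNReal.ofReal (ℓ*ε) := hab S hSm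
      _ ≤ tau B ℓ (thickening ε'.toReal S) + ε' :=
          add_le_add (measure_mono (hthick S)) hofReal
  · calc tau B ℓ S ≤ tau A ℓ (cthickening (2*(ℓ*ε)) S) + ENNReal.ofReal (ℓ*ε) := hba S hSm
      _ ≤ tau A ℓ (thickening ε'.toReal S) + ε' :=
          add_le_add (measure_mono (hthick S)) hofReal

instance tau_isProbabilityMeasure (A : MMS) (ℓ : ℕ) : IsProbabilityMeasure (tau A ℓ) := by
  rw [tau]
  exact Measure.isProbabilityMeasure_map (continuous_distMatrix A.carrier ℓ).measurable.aemeasurable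

/-- If `d_GP(X_n, X) → 0`, then for every `ℓ ≥ 1` the distance matrix
distributions converge weakly. -/
theorem stmt14 (Xs : ℕ → MMS) (Y : MMS)
    (h : Filter.Tendsto (fun n => gpDist (Xs n) Y) Filter.atTop (nhds 0)) :
    ∀ ℓ : ℕ, 1 ≤ ℓ →
      ∀ F : BoundedContinuousFunction (Fin ℓ → Fin ℓ → ℝ) ℝ,
        Filter.Tendsto (fun n => ∫ v, F v ∂(tau (Xs n) ℓ)) Filter.atTop
          (nhds (∫ v, F v ∂(tau Y ℓ))) := by
  intro ℓ _ F
  set M := (Fin ℓ → Fin ℓ → ℝ)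
  set P : ℕ → ProbabilityMeasure M := fun n => ⟨tau (Xs n) ℓ, inferInstance⟩ with hP
  set Q : ProbabilityMeasure M := ⟨tau Y ℓ, inferInstance⟩ with hQ
  have key : ∀ δ : ℝ, 0 < δ → ∀ᶠ n in Filter.atTop,
      levyProkhorovEDist (tau (Xs n) ℓ) (tau Y ℓ) ≤ ENNReal.ofReal (2*(ℓ*δ)) := by
    intro δ hδ
    filter_upwards [h.eventually (gt_mem_nhds hδ)] with n hn
    have hne : Set.Nonempty {ε : ℝ | 0 < ε ∧ ∃ (Z : Type) (_ : MetricSpace Z)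
        (_ : MeasurableSpace Z) (_ : BorelSpace Z)
        (φ : (Xs n).carrier → Z) (φ' : Y.carrier → Z),
        Isometry φ ∧ Isometry φ' ∧ prohorovLE ε ((Xs n).μ.map φ) (Y.μ.map φ')} :=
      ⟨1, one_mem_gp_set (Xs n) Y⟩
    have hbdd : BddBelow {ε : ℝ | 0 < ε ∧ ∃ (Z : Type) (_ : MetricSpace Z)
        (_ : MeasurableSpace Z) (_ : BorelSpace Z)
        (φ : (Xs n).carrier → Z) (φ' : Y.carrier → Z),
        Isometry φ ∧ Isometry φ' ∧ prohorovLE ε ((Xs n).μ.map φ) (Y.μ.map φ')} :=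
      ⟨0, fun x hx => hx.1.le⟩
    have hlt : sInf {ε : ℝ | 0 < ε ∧ ∃ (Z : Type) (_ : MetricSpace Z)
        (_ : MeasurableSpace Z) (_ : BorelSpace Z)
        (φ : (Xs n).carrier → Z) (φ' : Y.carrier → Z),
        Isometry φ ∧ Isometry φ' ∧ prohorovLE ε ((Xs n).μ.map φ) (Y.μ.map φ')} < δ := hn
    obtain ⟨ε, hmem, hεδ⟩ := (csInf_lt_iff hbdd hne).mp hlt
    calc levyProkhorovEDist (tau (Xs n) ℓ) (tau Y ℓ)
        ≤ ENNReal.ofReal (2*(ℓ*ε)) := lp_bound (Xs n) Y ℓ hmem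
      _ ≤ ENNReal.ofReal (2*(ℓ*δ)) := by
          apply ENNReal.ofReal_le_ofReal
          have hℓ0 : (0:ℝ) ≤ (ℓ:ℝ) := Nat.cast_nonneg ℓ
          nlinarith [hmem.1.le]
  -- convergence in the Lévy-Prokhorov pseudometric space
  have hLP : Filter.Tendsto (fun n => (LevyProkhorov.toMeasureEquiv (α := ProbabilityMeasure M)).symm (P n))
      Filter.atTop (nhds ((LevyProkhorov.toMeasureEquiv (α := ProbabilityMeasure M)).symm Q)) := by
    rw [Metric.tendsto_atTop]
    intro η hη
    have hδ : (0:ℝ) < η / (2*ℓ+2) := by positivity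
    obtain ⟨N, hN⟩ := Filter.eventually_atTop.mp (key _ hδ)
    refine ⟨N, fun n hn => ?_⟩
    have hbound := hN n hn
    have hdist : dist ((LevyProkhorov.toMeasureEquiv (α := ProbabilityMeasure M)).symm (P n))
        ((LevyProkhorov.toMeasureEquiv (α := ProbabilityMeasure M)).symm Q) =
        (levyProkhorovEDist (tau (Xs n) ℓ) (tau Y ℓ)).toReal := rfl
    rw [hdist]
    have h1 : (levyProkhorovEDist (tau (Xs n) ℓ) (tau Y ℓ)).toReal ≤ 2*(ℓ*(η/(2*ℓ+2))) := by
      apply ENNReal.toReal_le_of_le_ofReal (by positivity) hbound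
    have hℓ0 : (0:ℝ) ≤ (ℓ:ℝ) := Nat.cast_nonneg ℓ
    have hc : (0:ℝ) < 2*(ℓ:ℝ)+2 := by positivity
    have h2 : 2*((ℓ:ℝ)*(η/(2*(ℓ:ℝ)+2))) < η := by
      have heq : 2*((ℓ:ℝ)*(η/(2*(ℓ:ℝ)+2))) = (2*(ℓ:ℝ))*η/(2*(ℓ:ℝ)+2) := by ring
      rw [heq, div_lt_iff₀ hc]
      nlinarith
    linarith
  have hcont := LevyProkhorov.continuous_toMeasure_probabilityMeasure (Ω := M)
  have htend : Filter.Tendsto P Filter.atTop (nhds Q) := by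
    have := (hcont.tendsto _).comp hLP
    exact this
  exact (ProbabilityMeasure.tendsto_iff_forall_integral_tendsto).mp htend F
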